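/- The Exponentiated Gradient regret bound: let ℓ_t : Δ_N → [0,1] be convex differentiable loss functions with gradients bounded in sup-norm by G. Let p_1 be uniform and p_{t+1,k} ∝ p_{t,k}·exp(−η ∇_k ℓ_t(p_t)). Then for η = (1/G)√(log N / T) and every q ∈ Δ_N: Σ_{t=1}^T ℓ_t(p_t) − Σ_{t=1}^T ℓ_t(q) ≤ 2G√(T log N). -/

import Mathlib

lemma eg_exp_quad {y : ℝ} (hy : |y| ≤ 1) : Real.exp y ≤ 1 + y + y ^ 2 := by
  have h := Real.exp_bound hy (n := 2) (by norm_num)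
  have h2 : ∑ m ∈ Finset.range 2, y ^ m / m.factorial = 1 + y := by
    simp [Finset.sum_range_succ]
  rw [h2] at h
  have h3 := (abs_sub_le_iff.1 h).1
  have h4 : |y| ^ 2 = y ^ 2 := sq_abs y
  have h5 : (Nat.succ 2 : ℝ) / ((Nat.factorial 2 : ℝ) * (2:ℕ)) = 3/4 := by
    norm_num [Nat.factorial]
  rw [h4, h5] at h3
  nlinarith [sq_nonneg y]

lemma eg_convex_grad {n : ℕ} {f : (Fin n → ℝ) → ℝ} {s : Set (Fin n → ℝ)}
    (hf : ConvexOn ℝ s f) {x y : Fin n → ℝ} (hx : x ∈ s) (hy : y ∈ s)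
    (hd : DifferentiableAt ℝ f x) :
    f x - f y ≤ fderiv ℝ f x (x - y) := by
  set φ : ℝ → ℝ := fun r => f (x + r • (y - x)) with hφdef
  have hline : HasDerivAt (fun r : ℝ => x + r • (y - x)) (y - x) 0 := by
    simpa using ((hasDerivAt_id (0:ℝ)).smul_const (y - x)).const_add x
  have hd' : HasFDerivAt f (fderiv ℝ f x) ((fun r : ℝ => x + r • (y - x)) 0) := by
    simpa using hd.hasFDerivAt
  have hφ0 : HasDerivAt φ (fderiv ℝ f x (y - x)) 0 := by
    exact hd'.comp_hasDerivAt (x := (0:ℝ)) hline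
  have key : fderiv ℝ f x (y - x) ≤ f y - f x := by
    have htends : Filter.Tendsto (slope φ 0) (nhdsWithin 0 (Set.Ioi 0))
        (nhds (fderiv ℝ f x (y - x))) :=
      (hasDerivAt_iff_tendsto_slope.1 hφ0).mono_left
        (nhdsWithin_mono _ fun r hr => ne_of_gt hr)
    refine le_of_tendsto htends ?_
    filter_upwards [Ioc_mem_nhdsGT_of_mem (Set.mem_Ico.2 ⟨le_refl (0:ℝ), one_pos⟩)]
      with r hr
    obtain ⟨hr0, hr1⟩ := hr
    have hmem : x + r • (y - x) = (1 - r) • x + r • y := by module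
    have hc := hf.2 hx hy (by linarith : (0:ℝ) ≤ 1 - r) hr0.le (by ring)
    rw [← hmem] at hc
    have hcc : φ r ≤ (1 - r) * f x + r * f y := by simpa [φ] using hc
    have hφ00 : φ 0 = f x := by simp [φ]
    rw [slope_def_field, div_le_iff₀ (by simpa using hr0 : (0:ℝ) < r - 0)]
    rw [hφ00]
    nlinarith
  have heq : fderiv ℝ f x (x - y) = -(fderiv ℝ f x (y - x)) := by
    rw [← map_neg]; congr 1; abel
  rw [heq]; linarith


/-- Exponentiated Gradient regret bound: for convex differentiable losses on the
simplex with values in [0,1] and gradients bounded in sup-norm by G, the EG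
update with η = (1/G)√(log N / T) has regret at most 2G√(T log N). -/
theorem stmt_6 (N T : ℕ) (hN : 2 ≤ N) (hT : 1 ≤ T)
    (G : ℝ) (hG : 0 < G)
    (ℓ : ℕ → (Fin N → ℝ) → ℝ)
    (hconv : ∀ t, ConvexOn ℝ (stdSimplex ℝ (Fin N)) (ℓ t))
    (hdiff : ∀ t (q : Fin N → ℝ), DifferentiableAt ℝ (ℓ t) q)
    (hrange : ∀ t, ∀ q ∈ stdSimplex ℝ (Fin N), ℓ t q ∈ Set.Icc (0 : ℝ) 1)
    (gr : ℕ → (Fin N → ℝ) → Fin N → ℝ)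
    (hgr : ∀ t (q : Fin N → ℝ) (k : Fin N), gr t q k = fderiv ℝ (ℓ t) q (Pi.single k 1))
    (hgrbd : ∀ t, ∀ q ∈ stdSimplex ℝ (Fin N), ∀ k, |gr t q k| ≤ G)
    (η : ℝ) (hη : η = (1 / G) * Real.sqrt (Real.log N / T))
    (p : ℕ → Fin N → ℝ)
    (hp0 : ∀ k, p 0 k = 1 / N)
    (hupd : ∀ t k, p (t + 1) k =
      p t k * Real.exp (-η * gr t (p t) k) /
        ∑ j, p t j * Real.exp (-η * gr t (p t) j)) :
    ∀ q ∈ stdSimplex ℝ (Fin N),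
      ∑ t ∈ Finset.range T, ℓ t (p t) - ∑ t ∈ Finset.range T, ℓ t q
        ≤ 2 * G * Real.sqrt (T * Real.log N) := by
  intro q hq
  have hNpos : (0:ℝ) < N := by positivity
  have hN1 : (1:ℝ) < N := by exact_mod_cast lt_of_lt_of_le one_lt_two (by exact_mod_cast hN)
  have hlogN : 0 < Real.log N := Real.log_pos hN1
  have hTpos : (0:ℝ) < T := by exact_mod_cast hT
  have hηpos : 0 < η := by
    rw [hη]; positivity
  -- cumulative gradients and partition function
  set L : ℕ → Fin N → ℝ := fun t k => ∑ s ∈ Finset.range t, gr s (p s) k with hL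
  set Z : ℕ → ℝ := fun t => ∑ j, Real.exp (-η * L t j) with hZ
  have hZpos : ∀ t, 0 < Z t := by
    intro t
    refine Finset.sum_pos (fun j _ => Real.exp_pos _) ?_
    exact ⟨⟨0, by omega⟩, Finset.mem_univ _⟩
  -- closed form for p
  have hform : ∀ t k, p t k = Real.exp (-η * L t k) / Z t := by
    intro t
    induction t with
    | zero =>
      intro k
      have hZ0 : Z 0 = N := by
        simp [hZ, hL]
      rw [hp0, hZ0]
      simp [hL]
    | succ t ih =>
      intro k
      have hnum : ∀ j, p t j * Real.exp (-η * gr t (p t) j)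
          = Real.exp (-η * L (t+1) j) / Z t := by
        intro j
        rw [ih j, div_mul_eq_mul_div, ← Real.exp_add]
        congr 2
        simp [hL, Finset.sum_range_succ]
        ring
      have hden : ∑ j, p t j * Real.exp (-η * gr t (p t) j) = Z (t+1) / Z t := by
        simp only [hnum]
        rw [← Finset.sum_div]
      rw [hupd, hnum, hden]
      rw [div_div_div_cancel_right₀]
      exact (hZpos t).ne'
  have hppos : ∀ t k, 0 < p t k := by
    intro t k; rw [hform]; exact div_pos (Real.exp_pos _) (hZpos t)
  have hpsum : ∀ t, ∑ k, p t k = 1 := by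
    intro t
    simp only [hform]
    rw [← Finset.sum_div]
    exact div_self (hZpos t).ne'
  have hpsimp : ∀ t, p t ∈ stdSimplex ℝ (Fin N) := by
    intro t
    exact ⟨fun k => (hppos t k).le, hpsum t⟩
  -- gradient inequality
  have hgrad : ∀ t, ℓ t (p t) - ℓ t q ≤ ∑ k, gr t (p t) k * (p t k - q k) := by
    intro t
    have h1 := eg_convex_grad (hconv t) (hpsimp t) hq (hdiff t (p t))
    refine h1.trans_eq ?_
    have hexp : p t - q = ∑ k, (p t k - q k) • (Pi.single k (1:ℝ) : Fin N → ℝ) := by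
      ext j
      rw [Finset.sum_apply]
      simp [Pi.single_apply]
    rw [hexp, map_sum]
    refine Finset.sum_congr rfl fun k _ => ?_
    rw [map_smul, hgr, smul_eq_mul]
    ring
  have hnum : ∀ t j, p t j * Real.exp (-η * gr t (p t) j)
      = Real.exp (-η * L (t+1) j) / Z t := by
    intro t j
    rw [hform t j, div_mul_eq_mul_div, ← Real.exp_add]
    congr 2
    simp [hL, Finset.sum_range_succ]
    ring
  have hqnn : ∀ k, 0 ≤ q k := hq.1
  have hqsum : ∑ k, q k = 1 := hq.2
  have hpair : ∀ t, ∑ k, gr t (p t) k * (p t k - q k) ≤ 2 * G := by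
    intro t
    have hk : ∀ k, gr t (p t) k * (p t k - q k) ≤ G * (p t k + q k) := by
      intro k
      have hb := hgrbd t (p t) (hpsimp t) k
      have h1 : gr t (p t) k * (p t k - q k) ≤ |gr t (p t) k| * |p t k - q k| := by
        calc gr t (p t) k * (p t k - q k) ≤ |gr t (p t) k * (p t k - q k)| := le_abs_self _
          _ = |gr t (p t) k| * |p t k - q k| := abs_mul _ _
      have h2 : |p t k - q k| ≤ p t k + q k := by
        rw [abs_sub_le_iff]
        constructor <;> linarith [(hppos t k).le, hqnn k]
      calc gr t (p t) k * (p t k - q k) ≤ |gr t (p t) k| * |p t k - q k| := h1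
        _ ≤ G * (p t k + q k) := by
            apply mul_le_mul hb h2 (abs_nonneg _) hG.le
    calc ∑ k, gr t (p t) k * (p t k - q k) ≤ ∑ k, G * (p t k + q k) :=
          Finset.sum_le_sum fun k _ => hk k
      _ = 2 * G := by
          rw [← Finset.mul_sum, Finset.sum_add_distrib, hpsum, hqsum]; ring
  rcases le_or_gt (T:ℝ) (Real.log N) with hcase | hcase
  · -- few rounds: trivial bound
    have hreg : ∑ t ∈ Finset.range T, ℓ t (p t) - ∑ t ∈ Finset.range T, ℓ t q
        ≤ (T:ℝ) * (2 * G) := by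
      rw [← Finset.sum_sub_distrib]
      calc ∑ t ∈ Finset.range T, (ℓ t (p t) - ℓ t q)
          ≤ ∑ _t ∈ Finset.range T, (2 * G) :=
            Finset.sum_le_sum fun t _ => (hgrad t).trans (hpair t)
        _ = (T:ℝ) * (2 * G) := by
            rw [Finset.sum_const, Finset.card_range, nsmul_eq_mul]
    refine hreg.trans ?_
    have hTle : (T:ℝ) ≤ Real.sqrt ((T:ℝ) * Real.log N) := by
      have h0 : (T:ℝ) = Real.sqrt ((T:ℝ) * (T:ℝ)) := (Real.sqrt_mul_self hTpos.le).symm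
      calc (T:ℝ) = Real.sqrt ((T:ℝ) * (T:ℝ)) := h0
        _ ≤ Real.sqrt ((T:ℝ) * Real.log N) := Real.sqrt_le_sqrt (by nlinarith)
    nlinarith [hTle, hG]
  · -- potential argument
    have hηG : η * G ≤ 1 := by
      have he : η * G = Real.sqrt (Real.log N / T) := by
        rw [hη]; field_simp
      rw [he]
      apply Real.sqrt_le_one.2
      rw [div_le_one hTpos]
      exact hcase.le
    have hstep : ∀ t, Real.log (Z (t+1)) - Real.log (Z t)
        ≤ -η * (∑ k, gr t (p t) k * p t k) + η^2 * G^2 := by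
      intro t
      set S := ∑ j, p t j * Real.exp (-η * gr t (p t) j) with hS
      have hSpos : 0 < S :=
        Finset.sum_pos (fun j _ => mul_pos (hppos t j) (Real.exp_pos _))
          ⟨⟨0, by omega⟩, Finset.mem_univ _⟩
      have hZrel : Z (t+1) = S * Z t := by
        show (∑ j, Real.exp (-η * L (t+1) j)) = S * Z t
        rw [hS, Finset.sum_mul]
        refine Finset.sum_congr rfl fun j _ => ?_
        rw [hnum t j, div_mul_cancel₀ _ (hZpos t).ne']
      have hlogrel : Real.log (Z (t+1)) = Real.log S + Real.log (Z t) := by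
        rw [hZrel, Real.log_mul hSpos.ne' (hZpos t).ne']
      have hSle : S ≤ 1 - η * (∑ k, gr t (p t) k * p t k) + η^2 * G^2 := by
        have hterm : ∀ j, p t j * Real.exp (-η * gr t (p t) j)
            ≤ p t j * (1 + (-η * gr t (p t) j) + (-η * gr t (p t) j)^2) := by
          intro j
          refine mul_le_mul_of_nonneg_left ?_ (hppos t j).le
          have hb := hgrbd t (p t) (hpsimp t) j
          have habs : |(-η * gr t (p t) j)| ≤ 1 := by
            rw [neg_mul, abs_neg, abs_mul, abs_of_nonneg hηpos.le]
            calc η * |gr t (p t) j| ≤ η * G :=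
                  mul_le_mul_of_nonneg_left hb hηpos.le
              _ ≤ 1 := hηG
          exact eg_exp_quad habs
        calc S ≤ ∑ j, p t j * (1 + (-η * gr t (p t) j) + (-η * gr t (p t) j)^2) :=
              Finset.sum_le_sum fun j _ => hterm j
          _ ≤ ∑ j, (p t j + p t j * (-η * gr t (p t) j) + p t j * (η^2 * G^2)) := by
              refine Finset.sum_le_sum fun j _ => ?_
              have hb := hgrbd t (p t) (hpsimp t) j
              have hg2 : (-η * gr t (p t) j)^2 ≤ η^2 * G^2 := by
                have h1 : (gr t (p t) j)^2 ≤ G^2 := by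
                  nlinarith [sq_abs (gr t (p t) j), abs_nonneg (gr t (p t) j)]
                have h2 : (-η * gr t (p t) j)^2 = η^2 * (gr t (p t) j)^2 := by ring
                rw [h2]
                exact mul_le_mul_of_nonneg_left h1 (sq_nonneg η)
              nlinarith [hppos t j]
          _ = 1 - η * (∑ k, gr t (p t) k * p t k) + η^2 * G^2 := by
              rw [Finset.sum_add_distrib, Finset.sum_add_distrib, hpsum]
              have e1 : ∑ j, p t j * (-η * gr t (p t) j)
                  = -η * ∑ k, gr t (p t) k * p t k := by
                rw [Finset.mul_sum]
                exact Finset.sum_congr rfl fun j _ => by ring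
              have e2 : ∑ j, p t j * (η^2 * G^2) = η^2 * G^2 := by
                rw [← Finset.sum_mul, hpsum, one_mul]
              rw [e1, e2]; ring
      have hlog := Real.log_le_sub_one_of_pos hSpos
      rw [hlogrel]
      linarith
    have hZ0 : Z 0 = N := by simp [hZ, hL]
    have htel : Real.log (Z T) - Real.log N
        ≤ -η * (∑ t ∈ Finset.range T, ∑ k, gr t (p t) k * p t k)
          + (T:ℝ) * (η^2 * G^2) := by
      have h1 : Real.log (Z T) - Real.log (Z 0)
          = ∑ t ∈ Finset.range T, (Real.log (Z (t+1)) - Real.log (Z t)) := by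
        rw [Finset.sum_range_sub (fun t => Real.log (Z t))]
      rw [← hZ0, h1]
      calc ∑ t ∈ Finset.range T, (Real.log (Z (t+1)) - Real.log (Z t))
          ≤ ∑ t ∈ Finset.range T,
              (-η * (∑ k, gr t (p t) k * p t k) + η^2 * G^2) :=
            Finset.sum_le_sum fun t _ => hstep t
        _ = -η * (∑ t ∈ Finset.range T, ∑ k, gr t (p t) k * p t k)
              + (T:ℝ) * (η^2 * G^2) := by
            rw [Finset.sum_add_distrib, ← Finset.mul_sum, Finset.sum_const,
              Finset.card_range, nsmul_eq_mul]
    have hlow : -η * (∑ t ∈ Finset.range T, ∑ k, gr t (p t) k * q k)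
        ≤ Real.log (Z T) := by
      have h1 : ∀ k, -η * L T k ≤ Real.log (Z T) := by
        intro k
        have hle : Real.exp (-η * L T k) ≤ Z T :=
          Finset.single_le_sum (f := fun j => Real.exp (-η * L T j))
            (fun j _ => (Real.exp_pos _).le) (Finset.mem_univ k)
        calc -η * L T k = Real.log (Real.exp (-η * L T k)) := (Real.log_exp _).symm
          _ ≤ Real.log (Z T) := Real.log_le_log (Real.exp_pos _) hle
      have h2 : ∑ t ∈ Finset.range T, ∑ k, gr t (p t) k * q k
          = ∑ k, q k * L T k := by
        rw [Finset.sum_comm]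
        refine Finset.sum_congr rfl fun k _ => ?_
        rw [hL, Finset.mul_sum]
        exact Finset.sum_congr rfl fun t _ => by ring
      rw [h2]
      calc -η * ∑ k, q k * L T k = ∑ k, q k * (-η * L T k) := by
            rw [Finset.mul_sum]
            exact Finset.sum_congr rfl fun k _ => by ring
        _ ≤ ∑ k, q k * Real.log (Z T) :=
            Finset.sum_le_sum fun k _ =>
              mul_le_mul_of_nonneg_left (h1 k) (hqnn k)
        _ = Real.log (Z T) := by rw [← Finset.sum_mul, hqsum, one_mul]
    have hmain : ∑ t ∈ Finset.range T, ∑ k, gr t (p t) k * (p t k - q k)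
        ≤ Real.log N / η + (T:ℝ) * (η * G^2) := by
      have hsplit : ∑ t ∈ Finset.range T, ∑ k, gr t (p t) k * (p t k - q k)
          = (∑ t ∈ Finset.range T, ∑ k, gr t (p t) k * p t k)
            - (∑ t ∈ Finset.range T, ∑ k, gr t (p t) k * q k) := by
        rw [← Finset.sum_sub_distrib]
        refine Finset.sum_congr rfl fun t _ => ?_
        rw [← Finset.sum_sub_distrib]
        exact Finset.sum_congr rfl fun k _ => by ring
      set A := ∑ t ∈ Finset.range T, ∑ k, gr t (p t) k * p t k with hA
      set B := ∑ t ∈ Finset.range T, ∑ k, gr t (p t) k * q k with hB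
      rw [hsplit]
      have h3 : η * (A - B) ≤ Real.log N + (T:ℝ) * (η^2 * G^2) := by
        nlinarith [htel, hlow]
      rw [← mul_le_mul_iff_right₀ hηpos]
      calc η * (A - B) ≤ Real.log N + (T:ℝ) * (η^2 * G^2) := h3
        _ = η * (Real.log N / η + (T:ℝ) * (η * G^2)) := by
            field_simp
    have hfinal : Real.log N / η + (T:ℝ) * (η * G^2)
        = 2 * G * Real.sqrt ((T:ℝ) * Real.log N) := by
      set a := Real.sqrt (Real.log N) with ha'
      set b := Real.sqrt (T:ℝ) with hb'
      have ha : 0 < a := Real.sqrt_pos.2 hlogN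
      have hbp : 0 < b := Real.sqrt_pos.2 hTpos
      have hηa : η = a / (G * b) := by
        rw [hη, Real.sqrt_div hlogN.le, ha', hb']
        field_simp
      have hsq : Real.sqrt ((T:ℝ) * Real.log N) = b * a := by
        rw [Real.sqrt_mul hTpos.le, ha', hb']
      have hla : Real.log N = a^2 := (Real.sq_sqrt hlogN.le).symm
      have hTb : (T:ℝ) = b^2 := (Real.sq_sqrt hTpos.le).symm
      rw [hsq, hηa, hla, hTb]
      field_simp
      ring
    calc ∑ t ∈ Finset.range T, ℓ t (p t) - ∑ t ∈ Finset.range T, ℓ t q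
        ≤ ∑ t ∈ Finset.range T, ∑ k, gr t (p t) k * (p t k - q k) := by
          rw [← Finset.sum_sub_distrib]
          exact Finset.sum_le_sum fun t _ => hgrad t
      _ ≤ Real.log N / η + (T:ℝ) * (η * G^2) := hmain
      _ = 2 * G * Real.sqrt ((T:ℝ) * Real.log N) := hfinal
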